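/- Let U be a bounded continuous function on the closure of the half-strip R̃ = (0, π) × (0, ∞) (coordinates (ξ, η)), harmonic in R̃, vanishing on the two lateral sides {0} × [0,∞) and {π} × [0,∞), and with boundary data φ(ξ) = U(ξ, 0) bounded on [0, π]. Then there exist constants A > 0 and C > 0 such that |U(ξ, η)| ≤ C e^{-Aη} for all (ξ, η) ∈ R̃ with η > 0. -/

import Mathlib

open Real

/-- `u` is harmonic on `s ⊆ ℝ²`: twice continuously differentiable with vanishing Laplacian. -/
def HarmonicOn (u : ℝ × ℝ → ℝ) (s : Set (ℝ × ℝ)) : Prop :=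
  ContDiffOn ℝ 2 u s ∧ ∀ p ∈ s,
    (fderiv ℝ (fun q => fderiv ℝ u q (1, 0)) p) (1, 0) +
      (fderiv ℝ (fun q => fderiv ℝ u q (0, 1)) p) (0, 1) = 0


noncomputable def cfun (x : ℝ) : ℝ := Real.cos (x/2 - π/4)
noncomputable def cfun' (x : ℝ) : ℝ := -Real.sin (x/2 - π/4) * (1/2)
noncomputable def cfun'' (x : ℝ) : ℝ := -(Real.cos (x/2 - π/4) * (1/2)) * (1/2)
noncomputable def ef (s a y : ℝ) : ℝ := a * Real.exp (s * y)

lemma cfun_hasDeriv (x : ℝ) : HasDerivAt cfun (cfun' x) x := by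
  have h : HasDerivAt (fun x : ℝ => x/2 - π/4) (1/2) x :=
    ((hasDerivAt_id x).div_const 2).sub_const (π/4)
  exact h.cos

lemma cfun'_hasDeriv (x : ℝ) : HasDerivAt cfun' (cfun'' x) x := by
  have h : HasDerivAt (fun x : ℝ => x/2 - π/4) (1/2) x :=
    ((hasDerivAt_id x).div_const 2).sub_const (π/4)
  exact (h.sin.neg).mul_const (1/2)

lemma ef_hasDeriv (s a y : ℝ) : HasDerivAt (ef s a) (ef s (a*s) y) y := by
  have h := (((hasDerivAt_id y).const_mul s).exp).const_mul a
  simp only [id_eq, mul_one] at h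
  have e : a * (Real.exp (s * y) * s) = ef s (a*s) y := by unfold ef; ring
  exact e ▸ h

lemma cos4_pos : 0 < Real.cos (π/4) := by
  rw [Real.cos_pi_div_four]; positivity

lemma cfun_mem {x : ℝ} (hx : x ∈ Set.Icc 0 π) : Real.cos (π/4) ≤ cfun x ∧ cfun x ≤ 1 := by
  obtain ⟨h0, h1⟩ := hx
  have habs : |x/2 - π/4| ≤ π/4 := abs_le.mpr ⟨by linarith, by linarith⟩
  constructor
  · have h2 : Real.cos |x/2 - π/4| ≥ Real.cos (π/4) :=
      Real.cos_le_cos_of_nonneg_of_le_pi (abs_nonneg _) (by linarith [Real.pi_pos]) habs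
    rwa [Real.cos_abs] at h2
  · exact Real.cos_le_one _

lemma lap_vanish {s : ℝ} (a : ℝ) (hs : s*s = 1/4) (x y : ℝ) :
    cfun'' x * ef s a y + cfun x * ef s (a*s*s) y = 0 := by
  unfold cfun cfun'' ef
  linear_combination (Real.cos (x/2 - π/4) * Real.exp (s*y) * a) * hs

open Filter


lemma sdt {f : ℝ → ℝ} {m : ℝ} (hd : ∀ᶠ t in nhds (0:ℝ), DifferentiableAt ℝ f t)
    (h2 : HasDerivAt (deriv f) m 0) (hmax : IsLocalMax f 0) : m ≤ 0 := by
  by_contra hm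
  push_neg at hm
  have h0 : deriv f 0 = 0 := hmax.deriv_eq_zero
  have hslope : ∀ᶠ t in nhdsWithin (0:ℝ) {(0:ℝ)}ᶜ, 0 < slope (deriv f) 0 t :=
    (hasDerivAt_iff_tendsto_slope.mp h2).eventually (eventually_gt_nhds hm)
  obtain ⟨δ₁, hδ₁, hball⟩ := Metric.eventually_nhds_iff.mp (hd.and hmax)
  obtain ⟨δ₂, hδ₂, hball2⟩ := Metric.mem_nhdsWithin_iff.mp hslope
  set t₀ := min δ₁ δ₂ / 2 with ht₀
  have hmin : 0 < min δ₁ δ₂ := lt_min hδ₁ hδ₂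
  have ht₀pos : 0 < t₀ := by positivity
  have ht₀lt1 : t₀ < δ₁ := by
    have := min_le_left δ₁ δ₂; rw [ht₀]; linarith
  have ht₀lt2 : t₀ < δ₂ := by
    have := min_le_right δ₁ δ₂; rw [ht₀]; linarith
  -- f is continuous on Icc 0 t₀ and deriv f > 0 on interior
  have hcont : ContinuousOn f (Set.Icc 0 t₀) := by
    intro t ht
    refine ((hball (y := t) ?_).1.continuousAt).continuousWithinAt
    rw [Real.dist_eq]
    rcases ht with ⟨h1, h2⟩
    rw [sub_zero, abs_of_nonneg h1]; linarith
  have hderiv : ∀ t ∈ interior (Set.Icc 0 t₀), 0 < deriv f t := by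
    intro t ht
    rw [interior_Icc] at ht
    rcases ht with ⟨h1, h2⟩
    have hs : 0 < slope (deriv f) 0 t := by
      apply hball2
      constructor
      · rw [Metric.mem_ball, Real.dist_eq, sub_zero, abs_of_nonneg h1.le]; linarith
      · simp; exact h1.ne'
    rw [slope_def_field, h0] at hs
    have : 0 < deriv f t / t := by simpa using hs
    have := mul_pos this h1
    rw [div_mul_cancel₀] at this
    · linarith
    · exact h1.ne'
  have hmono := strictMonoOn_of_deriv_pos (convex_Icc 0 t₀) hcont hderiv
  have : f 0 < f t₀ := hmono (Set.left_mem_Icc.mpr ht₀pos.le)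
    (Set.right_mem_Icc.mpr ht₀pos.le) ht₀pos
  have : f t₀ ≤ f 0 := (hball (y := t₀) (by rw [Real.dist_eq, sub_zero, abs_of_nonneg ht₀pos.le]; linarith)).2
  linarith


lemma prodFDeriv (f₁ f₁' f₂ f₂' : ℝ → ℝ) (h1 : ∀ x, HasDerivAt f₁ (f₁' x) x)
    (h2 : ∀ y, HasDerivAt f₂ (f₂' y) y) (p : ℝ × ℝ) :
    HasFDerivAt (fun q : ℝ × ℝ => f₁ q.1 * f₂ q.2)
      ((f₁ p.1 • (f₂' p.2 • ContinuousLinearMap.snd ℝ ℝ ℝ)) +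
        (f₂ p.2 • (f₁' p.1 • ContinuousLinearMap.fst ℝ ℝ ℝ))) p := by
  have hA : HasFDerivAt (fun q : ℝ × ℝ => f₁ q.1)
      (f₁' p.1 • ContinuousLinearMap.fst ℝ ℝ ℝ) p :=
    (h1 p.1).comp_hasFDerivAt p hasFDerivAt_fst
  have hB : HasFDerivAt (fun q : ℝ × ℝ => f₂ q.2)
      (f₂' p.2 • ContinuousLinearMap.snd ℝ ℝ ℝ) p :=
    (h2 p.2).comp_hasFDerivAt p hasFDerivAt_snd
  exact hA.mul hB

lemma prodFDeriv_apply₁ (f₁ f₁' f₂ f₂' : ℝ → ℝ) (h1 : ∀ x, HasDerivAt f₁ (f₁' x) x)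
    (h2 : ∀ y, HasDerivAt f₂ (f₂' y) y) (p : ℝ × ℝ) :
    fderiv ℝ (fun q : ℝ × ℝ => f₁ q.1 * f₂ q.2) p (1, 0) = f₁' p.1 * f₂ p.2 := by
  rw [(prodFDeriv f₁ f₁' f₂ f₂' h1 h2 p).fderiv]
  simp [mul_comm]

lemma prodFDeriv_apply₂ (f₁ f₁' f₂ f₂' : ℝ → ℝ) (h1 : ∀ x, HasDerivAt f₁ (f₁' x) x)
    (h2 : ∀ y, HasDerivAt f₂ (f₂' y) y) (p : ℝ × ℝ) :
    fderiv ℝ (fun q : ℝ × ℝ => f₁ q.1 * f₂ q.2) p (0, 1) = f₁ p.1 * f₂' p.2 := by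
  rw [(prodFDeriv f₁ f₁' f₂ f₂' h1 h2 p).fderiv]
  simp

lemma prodSecond₁ (f₁ f₁' f₁'' f₂ f₂' : ℝ → ℝ) (h1 : ∀ x, HasDerivAt f₁ (f₁' x) x)
    (h1' : ∀ x, HasDerivAt f₁' (f₁'' x) x) (h2 : ∀ y, HasDerivAt f₂ (f₂' y) y) (p : ℝ × ℝ) :
    fderiv ℝ (fun q : ℝ × ℝ => fderiv ℝ (fun r : ℝ × ℝ => f₁ r.1 * f₂ r.2) q (1, 0)) p (1, 0)
      = f₁'' p.1 * f₂ p.2 := by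
  have : (fun q : ℝ × ℝ => fderiv ℝ (fun r : ℝ × ℝ => f₁ r.1 * f₂ r.2) q (1, 0))
      = fun q : ℝ × ℝ => f₁' q.1 * f₂ q.2 :=
    funext fun q => prodFDeriv_apply₁ f₁ f₁' f₂ f₂' h1 h2 q
  rw [this]
  exact prodFDeriv_apply₁ f₁' f₁'' f₂ f₂' h1' h2 p

lemma prodSecond₂ (f₁ f₁' f₂ f₂' f₂'' : ℝ → ℝ) (h1 : ∀ x, HasDerivAt f₁ (f₁' x) x)
    (h2 : ∀ y, HasDerivAt f₂ (f₂' y) y) (h2' : ∀ y, HasDerivAt f₂' (f₂'' y) y) (p : ℝ × ℝ) :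
    fderiv ℝ (fun q : ℝ × ℝ => fderiv ℝ (fun r : ℝ × ℝ => f₁ r.1 * f₂ r.2) q (0, 1)) p (0, 1)
      = f₁ p.1 * f₂'' p.2 := by
  have : (fun q : ℝ × ℝ => fderiv ℝ (fun r : ℝ × ℝ => f₁ r.1 * f₂ r.2) q (0, 1))
      = fun q : ℝ × ℝ => f₁ q.1 * f₂' q.2 :=
    funext fun q => prodFDeriv_apply₂ f₁ f₁' f₂ f₂' h1 h2 q
  rw [this]
  exact prodFDeriv_apply₂ f₁ f₁' f₂' f₂'' h1 h2' p

lemma sdt2 {g : ℝ × ℝ → ℝ} {q : ℝ × ℝ} {s : Set (ℝ × ℝ)} (v : ℝ × ℝ)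
    (hs : IsOpen s) (hq : q ∈ s)
    (hdiff : ∀ p ∈ s, DifferentiableAt ℝ g p)
    (hdiff2 : DifferentiableAt ℝ (fun p => fderiv ℝ g p v) q)
    (hmax : IsLocalMax g q) :
    fderiv ℝ (fun p => fderiv ℝ g p v) q v ≤ 0 := by
  set ℓ : ℝ → ℝ × ℝ := fun t => q + t • v with hℓ
  have hℓ0 : ℓ 0 = q := by simp [hℓ]
  have hℓd : ∀ t : ℝ, HasDerivAt ℓ v t := by
    intro t
    have := ((hasDerivAt_id t).smul_const v).const_add q
    simp only [one_smul] at this; exact this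
  have hℓc : Continuous ℓ := by continuity
  have hT : IsOpen (ℓ ⁻¹' s) := hs.preimage hℓc
  have h0T : (0:ℝ) ∈ ℓ ⁻¹' s := by simp [Set.mem_preimage, hℓ0, hq]
  have hTn : ℓ ⁻¹' s ∈ nhds (0:ℝ) := hT.mem_nhds h0T
  have hline : ∀ t ∈ ℓ ⁻¹' s, HasDerivAt (fun u => g (ℓ u)) (fderiv ℝ g (ℓ t) v) t :=
    fun t ht => ((hdiff _ ht).hasFDerivAt.comp_hasDerivAt t (hℓd t))
  have hdiffev : ∀ᶠ t in nhds (0:ℝ), DifferentiableAt ℝ (fun u => g (ℓ u)) t :=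
    eventually_of_mem hTn fun t ht => (hline t ht).differentiableAt
  have hderivev : deriv (fun u => g (ℓ u)) =ᶠ[nhds (0:ℝ)] fun t => fderiv ℝ g (ℓ t) v :=
    eventually_of_mem hTn fun t ht => (hline t ht).deriv
  have hsec : HasDerivAt (fun t => fderiv ℝ g (ℓ t) v)
      (fderiv ℝ (fun p => fderiv ℝ g p v) q v) 0 := by
    have h1 : HasFDerivAt (fun p => fderiv ℝ g p v)
        (fderiv ℝ (fun p => fderiv ℝ g p v) q) (ℓ 0) := hℓ0.symm ▸ hdiff2.hasFDerivAt
    exact h1.comp_hasDerivAt 0 (hℓd 0)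
  have hsec' : HasDerivAt (deriv (fun u => g (ℓ u)))
      (fderiv ℝ (fun p => fderiv ℝ g p v) q v) 0 :=
    hsec.congr_of_eventuallyEq hderivev
  have hlm : IsLocalMax (fun u => g (ℓ u)) 0 := by
    have : Filter.Tendsto ℓ (nhds 0) (nhds q) := by
      rw [← hℓ0]; exact hℓc.continuousAt
    have h2 : ∀ᶠ t in nhds (0:ℝ), g (ℓ t) ≤ g q := this.eventually hmax
    simpa [IsLocalMax, IsMaxFilter, hℓ0] using h2
  exact sdt hdiffev hsec' hlm



set_option maxHeartbeats 2000000 in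
lemma onesided (U : ℝ × ℝ → ℝ) (M : ℝ)
    (hcont : ContinuousOn U (Set.Icc 0 π ×ˢ Set.Ici 0))
    (hM : ∀ p ∈ Set.Icc 0 π ×ˢ Set.Ici (0:ℝ), |U p| ≤ M)
    (hharm : HarmonicOn U (Set.Ioo 0 π ×ˢ Set.Ioi 0))
    (hside : ∀ η : ℝ, 0 ≤ η → U (0, η) = 0 ∧ U (π, η) = 0)
    (hMpos : 0 < M) (σ : ℝ) (hσ : σ = 1 ∨ σ = -1)
    (x₀ y₀ : ℝ) (hx0 : 0 < x₀) (hxπ : x₀ < π) (hy0 : 0 < y₀) :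
    σ * U (x₀, y₀) ≤ (M / Real.cos (π/4)) * Real.exp (-(1/2) * y₀) := by
  set S : Set (ℝ × ℝ) := Set.Ioo 0 π ×ˢ Set.Ioi 0 with hSdef
  have hSopen : IsOpen S := isOpen_Ioo.prod isOpen_Ioi
  set K : ℝ := M / Real.cos (π/4) with hKdef
  have hK : 0 < K := div_pos hMpos cos4_pos
  have hx0Icc : x₀ ∈ Set.Icc 0 π := ⟨hx0.le, hxπ.le⟩
  -- Step A
  have hstep : ∀ ε > 0, ∀ δ > 0,
      σ * U (x₀, y₀) - cfun x₀ * ef (-(1/2)) K y₀ - cfun x₀ * ef (1/2) ε y₀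
        ≤ δ * Real.exp π := by
    intro ε hε δ hδ
    have hεc : 0 < ε * Real.cos (π/4) := mul_pos hε cos4_pos
    set H := max (y₀ + 1) (2 * Real.log (M / (ε * Real.cos (π/4)) + 1)) with hHdef
    have hHy : y₀ + 1 ≤ H := le_max_left _ _
    have hHpos : 0 < H := by linarith
    have htop : M ≤ ε * Real.cos (π/4) * Real.exp ((1/2) * H) := by
      have harg : (0:ℝ) < M / (ε * Real.cos (π/4)) + 1 := by positivity
      have h2 : 2 * Real.log (M / (ε * Real.cos (π/4)) + 1) ≤ H := le_max_right _ _
      have hle : M / (ε * Real.cos (π/4)) + 1 ≤ Real.exp ((1/2) * H) := by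
        calc M / (ε * Real.cos (π/4)) + 1
            = Real.exp (Real.log (M / (ε * Real.cos (π/4)) + 1)) := (Real.exp_log harg).symm
          _ ≤ Real.exp ((1/2) * H) := Real.exp_le_exp.mpr (by linarith)
      have h3 := mul_le_mul_of_nonneg_left hle hεc.le
      have h4 : ε * Real.cos (π/4) * (M / (ε * Real.cos (π/4)) + 1)
          = M + ε * Real.cos (π/4) := by field_simp
      linarith [hεc]
    set g : ℝ × ℝ → ℝ := fun p =>
      σ * U p - cfun p.1 * ef (-(1/2)) K p.2 - cfun p.1 * ef (1/2) ε p.2 + Real.exp p.1 * δ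
      with hgdef
    set R : Set (ℝ × ℝ) := Set.Icc (0:ℝ) π ×ˢ Set.Icc (0:ℝ) H with hRdef
    have hRsub : R ⊆ Set.Icc 0 π ×ˢ Set.Ici (0:ℝ) :=
      Set.prod_mono subset_rfl Set.Icc_subset_Ici_self
    have hgcont : ContinuousOn g R := by
      have h1 : ContinuousOn U R := hcont.mono hRsub
      have h2 : Continuous fun p : ℝ × ℝ => cfun p.1 * ef (-(1/2)) K p.2 := by
        unfold cfun ef; fun_prop
      have h3 : Continuous fun p : ℝ × ℝ => cfun p.1 * ef (1/2) ε p.2 := by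
        unfold cfun ef; fun_prop
      have h4 : Continuous fun p : ℝ × ℝ => Real.exp p.1 * δ := by fun_prop
      exact (((continuousOn_const.mul h1).sub h2.continuousOn).sub h3.continuousOn).add
        h4.continuousOn
    have hp₀R : ((x₀, y₀) : ℝ × ℝ) ∈ R := ⟨⟨hx0.le, hxπ.le⟩, ⟨hy0.le, by linarith⟩⟩
    obtain ⟨⟨qx, qy⟩, hqR, hqmax⟩ :=
      (isCompact_Icc.prod isCompact_Icc).exists_isMaxOn ⟨(x₀, y₀), hp₀R⟩ hgcont
    obtain ⟨hqx, hqy⟩ := hqR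
    suffices hgq : g (qx, qy) ≤ δ * Real.exp π by
      have h5 : g (x₀, y₀) ≤ g (qx, qy) := hqmax hp₀R
      have h6 : (0:ℝ) ≤ Real.exp x₀ * δ := by positivity
      have h7 : g (x₀, y₀) = σ * U (x₀, y₀) - cfun x₀ * ef (-(1/2)) K y₀
          - cfun x₀ * ef (1/2) ε y₀ + Real.exp x₀ * δ := rfl
      clear_value g
      rw [h7] at h5
      linarith
    have hσU : ∀ p ∈ Set.Icc 0 π ×ˢ Set.Ici (0:ℝ), σ * U p ≤ M := by
      intro p hp
      have := hM p hp
      rcases hσ with h | h <;> rw [h] <;> cases' abs_le.mp this with hl hr <;> linarith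
    by_cases hqint : ((qx, qy) : ℝ × ℝ) ∈ Set.Ioo 0 π ×ˢ Set.Ioo 0 H
    · exfalso
      have hqS : ((qx, qy) : ℝ × ℝ) ∈ S := ⟨hqint.1, hqint.2.1⟩
      have hC2 := hharm.1
      have hUdiff : ∀ p ∈ S, DifferentiableAt ℝ U p := fun p hp =>
        (hC2.differentiableOn (by norm_num)).differentiableAt (hSopen.mem_nhds hp)
      have hfC1 : ContDiffOn ℝ 1 (fderiv ℝ U) S := hC2.fderiv_of_isOpen hSopen (by norm_num)
      have haU : ∀ v : ℝ × ℝ, ∀ p ∈ S, DifferentiableAt ℝ (fun r => fderiv ℝ U r v) p := by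
        intro v p hp
        have h1 : ContDiffOn ℝ 1 (fun r => fderiv ℝ U r v) S := hfC1.clm_apply contDiffOn_const
        exact (h1.differentiableOn one_ne_zero).differentiableAt (hSopen.mem_nhds hp)
      have hfB : ∀ y, HasDerivAt (ef (-(1/2)) K) ((ef (-(1/2)) (K * (-(1/2)))) y) y := fun y => ef_hasDeriv (-(1/2)) K y
      have hfB' : ∀ y, HasDerivAt (ef (-(1/2)) (K * (-(1/2)))) ((ef (-(1/2)) (K * (-(1/2)) * (-(1/2)))) y) y := fun y => ef_hasDeriv (-(1/2)) (K * (-(1/2))) y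
      have hfY : ∀ y, HasDerivAt (ef (1/2) ε) ((ef (1/2) (ε * (1/2))) y) y := fun y => ef_hasDeriv (1/2) ε y
      have hfY' : ∀ y, HasDerivAt (ef (1/2) (ε * (1/2))) ((ef (1/2) (ε * (1/2) * (1/2))) y) y := fun y => ef_hasDeriv (1/2) (ε * (1/2)) y
      have hBd : ∀ p : ℝ × ℝ, DifferentiableAt ℝ (fun r' : ℝ × ℝ => cfun r'.1 * ef (-(1/2)) K r'.2) p := fun p =>
        (prodFDeriv cfun cfun' (ef (-(1/2)) K) (ef (-(1/2)) (K * (-(1/2)))) cfun_hasDeriv hfB p).differentiableAt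
      have hYd : ∀ p : ℝ × ℝ, DifferentiableAt ℝ (fun r' : ℝ × ℝ => cfun r'.1 * ef (1/2) ε r'.2) p := fun p =>
        (prodFDeriv cfun cfun' (ef (1/2) ε) (ef (1/2) (ε * (1/2))) cfun_hasDeriv hfY p).differentiableAt
      have hZd : ∀ p : ℝ × ℝ, DifferentiableAt ℝ (fun r' : ℝ × ℝ => Real.exp r'.1 * δ) p := fun p =>
        (prodFDeriv Real.exp Real.exp (fun _ => δ) (fun _ => (0:ℝ))
          (fun x => Real.hasDerivAt_exp x) (fun y => hasDerivAt_const y δ) p).differentiableAt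
      have hgd : ∀ p ∈ S, DifferentiableAt ℝ g p := fun p hp =>
        ((((hUdiff p hp).const_mul σ).sub (hBd p)).sub (hYd p)).add (hZd p)
      have hfd : ∀ p ∈ S, ∀ v : ℝ × ℝ, fderiv ℝ g p v
          = σ * fderiv ℝ U p v - fderiv ℝ (fun r' : ℝ × ℝ => cfun r'.1 * ef (-(1/2)) K r'.2) p v - fderiv ℝ (fun r' : ℝ × ℝ => cfun r'.1 * ef (1/2) ε r'.2) p v
            + fderiv ℝ (fun r' : ℝ × ℝ => Real.exp r'.1 * δ) p v := by
        intro p hp v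
        have h1 : HasFDerivAt g
            (σ • fderiv ℝ U p - fderiv ℝ (fun r' : ℝ × ℝ => cfun r'.1 * ef (-(1/2)) K r'.2) p - fderiv ℝ (fun r' : ℝ × ℝ => cfun r'.1 * ef (1/2) ε r'.2) p
              + fderiv ℝ (fun r' : ℝ × ℝ => Real.exp r'.1 * δ) p) p :=
          ((((hUdiff p hp).hasFDerivAt.const_mul σ).sub (hBd p).hasFDerivAt).sub
            (hYd p).hasFDerivAt).add (hZd p).hasFDerivAt
        rw [h1.fderiv]
        simp [ContinuousLinearMap.add_apply, ContinuousLinearMap.sub_apply,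
          ContinuousLinearMap.smul_apply, smul_eq_mul]
      have hev : ∀ v : ℝ × ℝ, (fun r => fderiv ℝ g r v) =ᶠ[nhds ((qx, qy) : ℝ × ℝ)]
          (fun r => σ * fderiv ℝ U r v - fderiv ℝ (fun r' : ℝ × ℝ => cfun r'.1 * ef (-(1/2)) K r'.2) r v - fderiv ℝ (fun r' : ℝ × ℝ => cfun r'.1 * ef (1/2) ε r'.2) r v
            + fderiv ℝ (fun r' : ℝ × ℝ => Real.exp r'.1 * δ) r v) :=
        fun v => eventually_of_mem (hSopen.mem_nhds hqS) (fun p hp => hfd p hp v)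
      -- direction (1,0)
      have hB1eq : (fun r : ℝ × ℝ => fderiv ℝ (fun r' : ℝ × ℝ => cfun r'.1 * ef (-(1/2)) K r'.2) r (1, 0))
          = fun r : ℝ × ℝ => cfun' r.1 * (ef (-(1/2)) K) r.2 :=
        funext fun r => prodFDeriv_apply₁ cfun cfun' (ef (-(1/2)) K) (ef (-(1/2)) (K * (-(1/2)))) cfun_hasDeriv hfB r
      have hB1d : DifferentiableAt ℝ (fun r : ℝ × ℝ => fderiv ℝ (fun r' : ℝ × ℝ => cfun r'.1 * ef (-(1/2)) K r'.2) r (1, 0)) (qx, qy) := by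
        have h2 := (prodFDeriv cfun' cfun'' (ef (-(1/2)) K) (ef (-(1/2)) (K * (-(1/2)))) cfun'_hasDeriv hfB (qx, qy)).differentiableAt
        rwa [← hB1eq] at h2
      have hY1eq : (fun r : ℝ × ℝ => fderiv ℝ (fun r' : ℝ × ℝ => cfun r'.1 * ef (1/2) ε r'.2) r (1, 0))
          = fun r : ℝ × ℝ => cfun' r.1 * (ef (1/2) ε) r.2 :=
        funext fun r => prodFDeriv_apply₁ cfun cfun' (ef (1/2) ε) (ef (1/2) (ε * (1/2))) cfun_hasDeriv hfY r
      have hY1d : DifferentiableAt ℝ (fun r : ℝ × ℝ => fderiv ℝ (fun r' : ℝ × ℝ => cfun r'.1 * ef (1/2) ε r'.2) r (1, 0)) (qx, qy) := by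
        have h2 := (prodFDeriv cfun' cfun'' (ef (1/2) ε) (ef (1/2) (ε * (1/2))) cfun'_hasDeriv hfY (qx, qy)).differentiableAt
        rwa [← hY1eq] at h2
      have hZ1eq : (fun r : ℝ × ℝ => fderiv ℝ (fun r' : ℝ × ℝ => Real.exp r'.1 * δ) r (1, 0))
          = fun r : ℝ × ℝ => Real.exp r.1 * δ :=
        funext fun r => prodFDeriv_apply₁ Real.exp Real.exp (fun _ => δ) (fun _ => (0:ℝ))
          (fun x => Real.hasDerivAt_exp x) (fun y => hasDerivAt_const y δ) r
      have hZ1d : DifferentiableAt ℝ (fun r : ℝ × ℝ => fderiv ℝ (fun r' : ℝ × ℝ => Real.exp r'.1 * δ) r (1, 0)) (qx, qy) := by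
        have h2 := (prodFDeriv Real.exp Real.exp (fun _ => δ) (fun _ => (0:ℝ))
          (fun x => Real.hasDerivAt_exp x) (fun y => hasDerivAt_const y δ) (qx, qy)).differentiableAt
        rwa [← hZ1eq] at h2
      -- direction (0,1)
      have hB2eq : (fun r : ℝ × ℝ => fderiv ℝ (fun r' : ℝ × ℝ => cfun r'.1 * ef (-(1/2)) K r'.2) r (0, 1))
          = fun r : ℝ × ℝ => cfun r.1 * (ef (-(1/2)) (K * (-(1/2)))) r.2 :=
        funext fun r => prodFDeriv_apply₂ cfun cfun' (ef (-(1/2)) K) (ef (-(1/2)) (K * (-(1/2)))) cfun_hasDeriv hfB r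
      have hB2d : DifferentiableAt ℝ (fun r : ℝ × ℝ => fderiv ℝ (fun r' : ℝ × ℝ => cfun r'.1 * ef (-(1/2)) K r'.2) r (0, 1)) (qx, qy) := by
        have h2 := (prodFDeriv cfun cfun' (ef (-(1/2)) (K * (-(1/2)))) (ef (-(1/2)) (K * (-(1/2)) * (-(1/2)))) cfun_hasDeriv hfB' (qx, qy)).differentiableAt
        rwa [← hB2eq] at h2
      have hY2eq : (fun r : ℝ × ℝ => fderiv ℝ (fun r' : ℝ × ℝ => cfun r'.1 * ef (1/2) ε r'.2) r (0, 1))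
          = fun r : ℝ × ℝ => cfun r.1 * (ef (1/2) (ε * (1/2))) r.2 :=
        funext fun r => prodFDeriv_apply₂ cfun cfun' (ef (1/2) ε) (ef (1/2) (ε * (1/2))) cfun_hasDeriv hfY r
      have hY2d : DifferentiableAt ℝ (fun r : ℝ × ℝ => fderiv ℝ (fun r' : ℝ × ℝ => cfun r'.1 * ef (1/2) ε r'.2) r (0, 1)) (qx, qy) := by
        have h2 := (prodFDeriv cfun cfun' (ef (1/2) (ε * (1/2))) (ef (1/2) (ε * (1/2) * (1/2))) cfun_hasDeriv hfY' (qx, qy)).differentiableAt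
        rwa [← hY2eq] at h2
      have hZ2eq : (fun r : ℝ × ℝ => fderiv ℝ (fun r' : ℝ × ℝ => Real.exp r'.1 * δ) r (0, 1))
          = fun r : ℝ × ℝ => Real.exp r.1 * (0:ℝ) :=
        funext fun r => prodFDeriv_apply₂ Real.exp Real.exp (fun _ => δ) (fun _ => (0:ℝ))
          (fun x => Real.hasDerivAt_exp x) (fun y => hasDerivAt_const y δ) r
      have hZ2d : DifferentiableAt ℝ (fun r : ℝ × ℝ => fderiv ℝ (fun r' : ℝ × ℝ => Real.exp r'.1 * δ) r (0, 1)) (qx, qy) := by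
        have h2 := (prodFDeriv Real.exp Real.exp (fun _ => (0:ℝ)) (fun _ => (0:ℝ))
          (fun x => Real.hasDerivAt_exp x) (fun y => hasDerivAt_const y (0:ℝ)) (qx, qy)).differentiableAt
        rwa [← hZ2eq] at h2
      have hg1d : DifferentiableAt ℝ (fun r => fderiv ℝ g r (1, 0)) (qx, qy) :=
        (((((haU (1, 0) _ hqS).const_mul σ).sub hB1d).sub hY1d).add
          hZ1d).congr_of_eventuallyEq (hev (1, 0))
      have hg2d : DifferentiableAt ℝ (fun r => fderiv ℝ g r (0, 1)) (qx, qy) :=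
        (((((haU (0, 1) _ hqS).const_mul σ).sub hB2d).sub hY2d).add
          hZ2d).congr_of_eventuallyEq (hev (0, 1))
      have hval1 : fderiv ℝ (fun r => fderiv ℝ g r (1, 0)) (qx, qy) (1, 0)
          = σ * fderiv ℝ (fun r => fderiv ℝ U r (1, 0)) (qx, qy) (1, 0)
            - cfun'' qx * ef (-(1/2)) K qy - cfun'' qx * ef (1/2) ε qy + Real.exp qx * δ := by
        rw [(hev (1, 0)).fderiv_eq]
        have h1 : HasFDerivAt (fun r => σ * fderiv ℝ U r (1, 0) - fderiv ℝ (fun r' : ℝ × ℝ => cfun r'.1 * ef (-(1/2)) K r'.2) r (1, 0)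
              - fderiv ℝ (fun r' : ℝ × ℝ => cfun r'.1 * ef (1/2) ε r'.2) r (1, 0) + fderiv ℝ (fun r' : ℝ × ℝ => Real.exp r'.1 * δ) r (1, 0))
            (σ • fderiv ℝ (fun r => fderiv ℝ U r (1, 0)) (qx, qy)
              - fderiv ℝ (fun r : ℝ × ℝ => fderiv ℝ (fun r' : ℝ × ℝ => cfun r'.1 * ef (-(1/2)) K r'.2) r (1, 0)) (qx, qy)
              - fderiv ℝ (fun r : ℝ × ℝ => fderiv ℝ (fun r' : ℝ × ℝ => cfun r'.1 * ef (1/2) ε r'.2) r (1, 0)) (qx, qy)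
              + fderiv ℝ (fun r : ℝ × ℝ => fderiv ℝ (fun r' : ℝ × ℝ => Real.exp r'.1 * δ) r (1, 0)) (qx, qy)) (qx, qy) :=
          ((((haU (1, 0) _ hqS).hasFDerivAt.const_mul σ).sub hB1d.hasFDerivAt).sub
            hY1d.hasFDerivAt).add hZ1d.hasFDerivAt
        rw [h1.fderiv]
        have e1 : fderiv ℝ (fun r : ℝ × ℝ => fderiv ℝ (fun r' : ℝ × ℝ => cfun r'.1 * ef (-(1/2)) K r'.2) r (1, 0)) (qx, qy) (1, 0)
            = cfun'' qx * ef (-(1/2)) K qy :=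
          prodSecond₁ cfun cfun' cfun'' (ef (-(1/2)) K) (ef (-(1/2)) (K * (-(1/2)))) cfun_hasDeriv cfun'_hasDeriv hfB (qx, qy)
        have e2 : fderiv ℝ (fun r : ℝ × ℝ => fderiv ℝ (fun r' : ℝ × ℝ => cfun r'.1 * ef (1/2) ε r'.2) r (1, 0)) (qx, qy) (1, 0)
            = cfun'' qx * ef (1/2) ε qy :=
          prodSecond₁ cfun cfun' cfun'' (ef (1/2) ε) (ef (1/2) (ε * (1/2))) cfun_hasDeriv cfun'_hasDeriv hfY (qx, qy)
        have e3 : fderiv ℝ (fun r : ℝ × ℝ => fderiv ℝ (fun r' : ℝ × ℝ => Real.exp r'.1 * δ) r (1, 0)) (qx, qy) (1, 0)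
            = Real.exp qx * δ :=
          prodSecond₁ Real.exp Real.exp Real.exp (fun _ => δ) (fun _ => (0:ℝ))
            (fun x => Real.hasDerivAt_exp x) (fun x => Real.hasDerivAt_exp x)
            (fun y => hasDerivAt_const y δ) (qx, qy)
        simp only [ContinuousLinearMap.add_apply, ContinuousLinearMap.sub_apply,
          ContinuousLinearMap.smul_apply, smul_eq_mul]
        rw [e1, e2, e3]
      have hval2 : fderiv ℝ (fun r => fderiv ℝ g r (0, 1)) (qx, qy) (0, 1)
          = σ * fderiv ℝ (fun r => fderiv ℝ U r (0, 1)) (qx, qy) (0, 1)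
            - cfun qx * ef (-(1/2)) (K * (-(1/2)) * (-(1/2))) qy
            - cfun qx * ef (1/2) (ε * (1/2) * (1/2)) qy + Real.exp qx * 0 := by
        rw [(hev (0, 1)).fderiv_eq]
        have h1 : HasFDerivAt (fun r => σ * fderiv ℝ U r (0, 1) - fderiv ℝ (fun r' : ℝ × ℝ => cfun r'.1 * ef (-(1/2)) K r'.2) r (0, 1)
              - fderiv ℝ (fun r' : ℝ × ℝ => cfun r'.1 * ef (1/2) ε r'.2) r (0, 1) + fderiv ℝ (fun r' : ℝ × ℝ => Real.exp r'.1 * δ) r (0, 1))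
            (σ • fderiv ℝ (fun r => fderiv ℝ U r (0, 1)) (qx, qy)
              - fderiv ℝ (fun r : ℝ × ℝ => fderiv ℝ (fun r' : ℝ × ℝ => cfun r'.1 * ef (-(1/2)) K r'.2) r (0, 1)) (qx, qy)
              - fderiv ℝ (fun r : ℝ × ℝ => fderiv ℝ (fun r' : ℝ × ℝ => cfun r'.1 * ef (1/2) ε r'.2) r (0, 1)) (qx, qy)
              + fderiv ℝ (fun r : ℝ × ℝ => fderiv ℝ (fun r' : ℝ × ℝ => Real.exp r'.1 * δ) r (0, 1)) (qx, qy)) (qx, qy) :=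
          ((((haU (0, 1) _ hqS).hasFDerivAt.const_mul σ).sub hB2d.hasFDerivAt).sub
            hY2d.hasFDerivAt).add hZ2d.hasFDerivAt
        rw [h1.fderiv]
        have e1 : fderiv ℝ (fun r : ℝ × ℝ => fderiv ℝ (fun r' : ℝ × ℝ => cfun r'.1 * ef (-(1/2)) K r'.2) r (0, 1)) (qx, qy) (0, 1)
            = cfun qx * ef (-(1/2)) (K * (-(1/2)) * (-(1/2))) qy :=
          prodSecond₂ cfun cfun' (ef (-(1/2)) K) (ef (-(1/2)) (K * (-(1/2)))) (ef (-(1/2)) (K * (-(1/2)) * (-(1/2)))) cfun_hasDeriv hfB hfB' (qx, qy)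
        have e2 : fderiv ℝ (fun r : ℝ × ℝ => fderiv ℝ (fun r' : ℝ × ℝ => cfun r'.1 * ef (1/2) ε r'.2) r (0, 1)) (qx, qy) (0, 1)
            = cfun qx * ef (1/2) (ε * (1/2) * (1/2)) qy :=
          prodSecond₂ cfun cfun' (ef (1/2) ε) (ef (1/2) (ε * (1/2))) (ef (1/2) (ε * (1/2) * (1/2))) cfun_hasDeriv hfY hfY' (qx, qy)
        have e3 : fderiv ℝ (fun r : ℝ × ℝ => fderiv ℝ (fun r' : ℝ × ℝ => Real.exp r'.1 * δ) r (0, 1)) (qx, qy) (0, 1)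
            = Real.exp qx * 0 :=
          prodSecond₂ Real.exp Real.exp (fun _ => δ) (fun _ => (0:ℝ)) (fun _ => (0:ℝ))
            (fun x => Real.hasDerivAt_exp x) (fun y => hasDerivAt_const y δ)
            (fun y => hasDerivAt_const y (0:ℝ)) (qx, qy)
        simp only [ContinuousLinearMap.add_apply, ContinuousLinearMap.sub_apply,
          ContinuousLinearMap.smul_apply, smul_eq_mul]
        rw [e1, e2, e3]
      have hloc : IsLocalMax g (qx, qy) :=
        hqmax.isLocalMax (Filter.mem_of_superset
          ((isOpen_Ioo.prod isOpen_Ioo).mem_nhds hqint)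
          (Set.prod_mono Set.Ioo_subset_Icc_self Set.Ioo_subset_Icc_self))
      have hs1 : fderiv ℝ (fun r => fderiv ℝ g r (1, 0)) (qx, qy) (1, 0) ≤ 0 :=
        sdt2 (1, 0) hSopen hqS hgd hg1d hloc
      have hs2 : fderiv ℝ (fun r => fderiv ℝ g r (0, 1)) (qx, qy) (0, 1) ≤ 0 :=
        sdt2 (0, 1) hSopen hqS hgd hg2d hloc
      have hU0 := hharm.2 (qx, qy) hqS
      have hσ0 : σ * fderiv ℝ (fun r => fderiv ℝ U r (1, 0)) (qx, qy) (1, 0)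
          + σ * fderiv ℝ (fun r => fderiv ℝ U r (0, 1)) (qx, qy) (0, 1) = 0 := by
        rw [← mul_add, hU0, mul_zero]
      have hlapB := lap_vanish (s := -(1/2)) K (by norm_num) qx qy
      have hlapY := lap_vanish (s := (1/2)) ε (by norm_num) qx qy
      have hδexp : 0 < Real.exp qx * δ := mul_pos (Real.exp_pos qx) hδ
      linarith [hs1, hs2, hval1, hval2, hσ0, hlapB, hlapY, hδexp]
    · have hcases : qx = 0 ∨ qx = π ∨ qy = 0 ∨ qy = H := by
        by_contra hc
        push_neg at hc
        obtain ⟨h1, h2, h3, h4⟩ := hc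
        exact hqint ⟨⟨lt_of_le_of_ne hqx.1 (Ne.symm h1), lt_of_le_of_ne hqx.2 h2⟩,
          lt_of_le_of_ne hqy.1 (Ne.symm h3), lt_of_le_of_ne hqy.2 h4⟩
      have hcq := cfun_mem hqx
      have hc0 : (0:ℝ) ≤ cfun qx := le_trans cos4_pos.le hcq.1
      have hefB : (0:ℝ) ≤ ef (-(1/2)) K qy := mul_nonneg hK.le (Real.exp_pos _).le
      have hefY : (0:ℝ) ≤ ef (1/2) ε qy := mul_nonneg hε.le (Real.exp_pos _).le
      have hBnn : (0:ℝ) ≤ cfun qx * ef (-(1/2)) K qy := mul_nonneg hc0 hefB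
      have hYnn : (0:ℝ) ≤ cfun qx * ef (1/2) ε qy := mul_nonneg hc0 hefY
      have hZb : Real.exp qx * δ ≤ δ * Real.exp π := by
        have h9 := Real.exp_le_exp.mpr hqx.2
        nlinarith [hδ.le]
      have hgval : g (qx, qy) = σ * U (qx, qy) - cfun qx * ef (-(1/2)) K qy
          - cfun qx * ef (1/2) ε qy + Real.exp qx * δ := rfl
      have hqmem : ((qx, qy) : ℝ × ℝ) ∈ Set.Icc 0 π ×ˢ Set.Ici (0:ℝ) := ⟨hqx, hqy.1⟩
      rcases hcases with h | h | h | h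
      · have hU0 : U (qx, qy) = 0 := by rw [h]; exact (hside qy hqy.1).1
        rw [hgval, hU0]
        linarith [hBnn, hYnn, hZb]
      · have hU0 : U (qx, qy) = 0 := by rw [h]; exact (hside qy hqy.1).2
        rw [hgval, hU0]
        linarith [hBnn, hYnn, hZb]
      · have hB0 : ef (-(1/2)) K qy = K := by rw [h]; unfold ef; simp
        have hMB : M ≤ cfun qx * ef (-(1/2)) K qy := by
          rw [hB0]
          have h9 : Real.cos (π/4) * K ≤ cfun qx * K := mul_le_mul_of_nonneg_right hcq.1 hK.le
          have h10 : Real.cos (π/4) * K = M := by rw [hKdef]; field_simp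
          linarith
        have hUq := hσU _ hqmem
        rw [hgval]; linarith [hYnn, hZb, hUq, hMB]
      · have hMY : M ≤ cfun qx * ef (1/2) ε qy := by
          have h9 : ef (1/2) ε qy = ε * Real.exp ((1/2) * H) := by rw [h]; unfold ef; ring_nf
          rw [h9]
          calc M ≤ ε * Real.cos (π/4) * Real.exp ((1/2) * H) := htop
            _ ≤ cfun qx * (ε * Real.exp ((1/2) * H)) := by
                nlinarith [hcq.1, (Real.exp_pos ((1/2)*H)).le, hε.le]
        have hUq := hσU _ hqmem
        rw [hgval]; linarith [hBnn, hZb, hUq, hMY]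
  -- Step B : δ → 0
  have hstep2 : ∀ ε > 0,
      σ * U (x₀, y₀) - cfun x₀ * ef (-(1/2)) K y₀ - cfun x₀ * ef (1/2) ε y₀ ≤ 0 := by
    intro ε hε
    by_contra hcon
    push_neg at hcon
    have hE : (0:ℝ) < Real.exp π := Real.exp_pos π
    set a := σ * U (x₀, y₀) - cfun x₀ * ef (-(1/2)) K y₀ - cfun x₀ * ef (1/2) ε y₀ with hadef
    have h1 : a ≤ a / (2 * Real.exp π) * Real.exp π := hstep ε hε _ (by positivity)
    have h2 : a / (2 * Real.exp π) * Real.exp π = a / 2 := by field_simp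
    rw [h2] at h1
    clear_value a
    linarith
  -- Step C : ε → 0
  have hstep3 : σ * U (x₀, y₀) ≤ cfun x₀ * ef (-(1/2)) K y₀ := by
    by_contra hcon
    push_neg at hcon
    set a := σ * U (x₀, y₀) - cfun x₀ * ef (-(1/2)) K y₀ with hadef
    have ha : 0 < a := by rw [hadef]; linarith
    have hE : (0:ℝ) < Real.exp ((1/2) * y₀) := Real.exp_pos _
    have h1 := hstep2 (a / (2 * Real.exp ((1/2) * y₀))) (by positivity)
    have h2 : cfun x₀ * ef (1/2) (a / (2 * Real.exp ((1/2) * y₀))) y₀ ≤ a / 2 := by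
      have hc := cfun_mem hx0Icc
      have hefnn : (0:ℝ) ≤ ef (1/2) (a / (2 * Real.exp ((1/2) * y₀))) y₀ := by
        unfold ef; positivity
      have h3 : cfun x₀ * ef (1/2) (a / (2 * Real.exp ((1/2) * y₀))) y₀
          ≤ 1 * ef (1/2) (a / (2 * Real.exp ((1/2) * y₀))) y₀ :=
        mul_le_mul_of_nonneg_right hc.2 hefnn
      have h4 : ef (1/2) (a / (2 * Real.exp ((1/2) * y₀))) y₀ = a / 2 := by
        unfold ef; field_simp
      rw [one_mul] at h3
      calc cfun x₀ * ef (1/2) (a / (2 * Real.exp ((1/2) * y₀))) y₀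
          ≤ ef (1/2) (a / (2 * Real.exp ((1/2) * y₀))) y₀ := h3
        _ = a / 2 := h4
    clear_value a
    linarith
  -- Step D
  have hc := cfun_mem hx0Icc
  have hefnn : (0:ℝ) ≤ ef (-(1/2)) K y₀ := by unfold ef; positivity
  have h5 : cfun x₀ * ef (-(1/2)) K y₀ ≤ ef (-(1/2)) K y₀ := by
    nlinarith [hefnn, hc.2]
  have h7 : σ * U (x₀, y₀) ≤ ef (-(1/2)) K y₀ := le_trans hstep3 h5
  have h6 : ef (-(1/2)) K y₀ = K * Real.exp (-(1/2) * y₀) := rfl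
  rw [h6] at h7
  exact h7

/-- A bounded continuous function on the closed half-strip `[0,π] × [0,∞)`, harmonic inside
and vanishing on the two lateral sides, decays exponentially: `|U(ξ,η)| ≤ C e^{-Aη}`. -/
theorem stmt15 (U : ℝ × ℝ → ℝ)
    (hcont : ContinuousOn U (closure (Set.Ioo 0 π ×ˢ Set.Ioi (0 : ℝ))))
    (hbdd : ∃ M : ℝ, ∀ p ∈ closure (Set.Ioo 0 π ×ˢ Set.Ioi (0 : ℝ)), |U p| ≤ M)
    (hharm : HarmonicOn U (Set.Ioo 0 π ×ˢ Set.Ioi (0 : ℝ)))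
    (hside : ∀ η : ℝ, 0 ≤ η → U (0, η) = 0 ∧ U (π, η) = 0) :
    ∃ A > 0, ∃ C > 0, ∀ p ∈ Set.Ioo 0 π ×ˢ Set.Ioi (0 : ℝ),
      |U p| ≤ C * Real.exp (-A * p.2) := by

  have hcl : closure (Set.Ioo 0 π ×ˢ Set.Ioi (0:ℝ)) = Set.Icc 0 π ×ˢ Set.Ici 0 := by
    rw [closure_prod_eq, closure_Ioo (Ne.symm Real.pi_ne_zero), closure_Ioi]
  obtain ⟨M₀, hM₀⟩ := hbdd
  set M := |M₀| + 1 with hMdef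
  have hMpos : 0 < M := by positivity
  have hM : ∀ p ∈ Set.Icc 0 π ×ˢ Set.Ici (0:ℝ), |U p| ≤ M := by
    intro p hp
    have h1 := hM₀ p (by rw [hcl]; exact hp)
    have h2 : M₀ ≤ |M₀| := le_abs_self M₀
    rw [hMdef]; linarith
  have hcont' : ContinuousOn U (Set.Icc 0 π ×ˢ Set.Ici 0) := by rw [← hcl]; exact hcont
  refine ⟨1/2, by norm_num, M / Real.cos (π/4), div_pos hMpos cos4_pos, ?_⟩
  rintro ⟨x, y⟩ ⟨hx, hy⟩
  have h1 := onesided U M hcont' hM hharm hside hMpos 1 (Or.inl rfl) x y hx.1 hx.2 hy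
  have h2 := onesided U M hcont' hM hharm hside hMpos (-1) (Or.inr rfl) x y hx.1 hx.2 hy
  rw [one_mul] at h1
  rw [neg_one_mul] at h2
  have hgoal : |U (x, y)| ≤ M / Real.cos (π/4) * Real.exp (-(1/2) * y) :=
    abs_le.mpr ⟨by linarith, h1⟩
  simpa using hgoal
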